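/- In the Weyl algebra with [x,p] = i, for all natural numbers M, N, the identity {x^M, p^N} = −(2i/((N+1)(M+1))) [x^{M+1}, p^{N+1}] − (1/(N+1)) Σ_{k=1}^{N−1} [p^{N−k}, [x^M, p^k]] holds. -/

import Mathlib

open Finset

lemma weyl_aux_A {R : Type*} [Ring R] [Algebra ℂ R]
    (x p : R) (h : x * p - p * x = Complex.I • (1 : R)) (M : ℕ) :
    x ^ (M + 1) * p - p * x ^ (M + 1) = (((M : ℂ) + 1) * Complex.I) • x ^ M := by
  induction M with
  | zero => simpa using h
  | succ M ih =>
    have key : x ^ (M + 2) * p - p * x ^ (M + 2)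
        = x * (x ^ (M + 1) * p - p * x ^ (M + 1)) + (x * p - p * x) * x ^ (M + 1) := by
      rw [pow_succ' x (M + 1)]
      noncomm_ring
    rw [key, ih, h, mul_smul_comm, smul_mul_assoc, one_mul,
      ← pow_succ' x M, ← add_smul]
    push_cast
    ring_nf

lemma weyl_aux_B {R : Type*} [Ring R] [Algebra ℂ R]
    (x p : R) (h : x * p - p * x = Complex.I • (1 : R)) (M N : ℕ) :
    x ^ (M + 1) * p ^ (N + 1) - p ^ (N + 1) * x ^ (M + 1)
      = (((M : ℂ) + 1) * Complex.I) • ∑ j ∈ range (N + 1), p ^ j * x ^ M * p ^ (N - j) := by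
  induction N with
  | zero => simpa using weyl_aux_A x p h M
  | succ N ih =>
    have key : x ^ (M + 1) * p ^ (N + 2) - p ^ (N + 2) * x ^ (M + 1)
        = (x ^ (M + 1) * p ^ (N + 1) - p ^ (N + 1) * x ^ (M + 1)) * p
          + p ^ (N + 1) * (x ^ (M + 1) * p - p * x ^ (M + 1)) := by
      rw [pow_succ p (N + 1)]
      noncomm_ring
    rw [key, ih, weyl_aux_A x p h M, smul_mul_assoc, mul_smul_comm, ← smul_add]
    congr 1
    rw [Finset.sum_mul, Finset.sum_range_succ (fun j => p ^ j * x ^ M * p ^ (N + 1 - j)) (N + 1)]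
    simp only [Nat.sub_self, pow_zero, mul_one]
    congr 1
    refine Finset.sum_congr rfl fun j hj => ?_
    have hjN : j ≤ N := Nat.lt_succ_iff.mp (Finset.mem_range.mp hj)
    rw [mul_assoc, ← pow_succ, Nat.succ_sub hjN]

lemma weyl_aux_C {R : Type*} [Ring R] [Algebra ℂ R]
    (x p : R) (M N : ℕ) :
    ∑ k ∈ Finset.Ico 1 (N + 1),
        (p ^ (N + 1 - k) * (x ^ M * p ^ k - p ^ k * x ^ M)
          - (x ^ M * p ^ k - p ^ k * x ^ M) * p ^ (N + 1 - k))
      = (2 : ℂ) • (∑ j ∈ range (N + 2), p ^ j * x ^ M * p ^ (N + 1 - j))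
        - ((N : ℂ) + 2) • (x ^ M * p ^ (N + 1) + p ^ (N + 1) * x ^ M) := by
  have hsummand : ∀ k ∈ Finset.Ico 1 (N + 1),
      p ^ (N + 1 - k) * (x ^ M * p ^ k - p ^ k * x ^ M)
        - (x ^ M * p ^ k - p ^ k * x ^ M) * p ^ (N + 1 - k)
      = (p ^ (N + 1 - k) * x ^ M * p ^ k + p ^ k * x ^ M * p ^ (N + 1 - k))
        - (p ^ (N + 1) * x ^ M + x ^ M * p ^ (N + 1)) := by
    intro k hk
    obtain ⟨hk1, hk2⟩ := Finset.mem_Ico.mp hk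
    have hkle : k ≤ N + 1 := le_of_lt hk2
    have e1 : p ^ (N + 1 - k) * (p ^ k * x ^ M) = p ^ (N + 1) * x ^ M := by
      rw [← mul_assoc, ← pow_add, Nat.sub_add_cancel hkle]
    have e2 : x ^ M * p ^ k * p ^ (N + 1 - k) = x ^ M * p ^ (N + 1) := by
      rw [mul_assoc, ← pow_add, Nat.add_sub_cancel' hkle]
    rw [mul_sub, sub_mul, e1, e2]
    noncomm_ring
  rw [Finset.sum_congr rfl hsummand, Finset.sum_sub_distrib, Finset.sum_add_distrib,
    Finset.sum_const, Nat.card_Ico, Nat.add_sub_cancel]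
  have hreindex : ∑ k ∈ Finset.Ico 1 (N + 1), p ^ (N + 1 - k) * x ^ M * p ^ k
      = ∑ k ∈ Finset.Ico 1 (N + 1), p ^ k * x ^ M * p ^ (N + 1 - k) := by
    refine Finset.sum_nbij' (fun k => N + 1 - k) (fun k => N + 1 - k) ?_ ?_ ?_ ?_ ?_ <;>
      intro k hk <;> simp only [Finset.mem_Ico] at hk ⊢ <;> first
        | omega
        | (obtain ⟨hk1, hk2⟩ := hk
           have h1 : N + 1 - (N + 1 - k) = k := by omega
           simp only [h1])
  rw [hreindex]
  have hS : ∑ j ∈ range (N + 2), p ^ j * x ^ M * p ^ (N + 1 - j)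
      = x ^ M * p ^ (N + 1)
        + (∑ k ∈ Finset.Ico 1 (N + 1), p ^ k * x ^ M * p ^ (N + 1 - k))
        + p ^ (N + 1) * x ^ M := by
    rw [Finset.range_eq_Ico, Finset.sum_eq_sum_Ico_succ_bot (by omega : 0 < N + 2),
      Finset.sum_Ico_succ_top (by omega : 1 ≤ N + 1)]
    simp only [pow_zero, one_mul, Nat.sub_zero, Nat.sub_self, mul_one]
    abel
  rw [hS]
  module

theorem weyl_anticommutator_identity {R : Type*} [Ring R] [Algebra ℂ R]
    (x p : R) (h : x * p - p * x = Complex.I • (1 : R)) (M N : ℕ) :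
    x ^ M * p ^ N + p ^ N * x ^ M =
      (-(2 * Complex.I) / (((N : ℂ) + 1) * ((M : ℂ) + 1))) •
        (x ^ (M + 1) * p ^ (N + 1) - p ^ (N + 1) * x ^ (M + 1))
      - ((1 : ℂ) / ((N : ℂ) + 1)) •
        ∑ k ∈ Finset.Ico 1 N,
          (p ^ (N - k) * (x ^ M * p ^ k - p ^ k * x ^ M)
            - (x ^ M * p ^ k - p ^ k * x ^ M) * p ^ (N - k)) := by
  have hM : ((M : ℂ) + 1) ≠ 0 := by
    exact_mod_cast Nat.cast_add_one_ne_zero (R := ℂ) M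
  have hI := Complex.I_sq
  rcases N with _ | ν
  · rw [weyl_aux_B x p h M 0, Finset.Ico_eq_empty (by omega : ¬ (1:ℕ) < 0)]
    simp only [Finset.sum_empty, smul_zero, sub_zero,
      Finset.sum_range_one, pow_zero, one_mul, Nat.sub_zero, mul_one,
      Nat.cast_zero, zero_add, smul_smul]
    have hc : -(2 * Complex.I) / (((M : ℂ) + 1)) * (((M : ℂ) + 1) * Complex.I) = 2 := by
      field_simp
      linear_combination (-1 : ℂ) * Complex.I_sq
    rw [hc, two_smul]
  · have hN : ((ν : ℂ) + 1 + 1) ≠ 0 := by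
      have : ((ν + 1 : ℕ) : ℂ) + 1 ≠ 0 := Nat.cast_add_one_ne_zero (ν + 1)
      push_cast at this
      exact this
    rw [weyl_aux_B x p h M (ν + 1), weyl_aux_C x p M ν]
    push_cast
    match_scalars
    · field_simp
      ring
    · field_simp
      ring
    · have e : -(2 * Complex.I) / (((ν:ℂ)+1+1) * ((M:ℂ)+1)) * (((M:ℂ)+1) * Complex.I * 1)
          = 2 / ((ν:ℂ)+1+1) := by
        rw [div_mul_eq_mul_div, div_eq_div_iff (mul_ne_zero hN hM) hN]
        linear_combination (-2*((M:ℂ)+1)*((ν:ℂ)+1+1)) * Complex.I_sq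
      rw [e]
      ring
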